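/- arXiv:1312.4620 — 3 statements merged into one kernel-verified Lean document; each statement's English description precedes it below -/
import Mathlib

section
/- Let φ be the asymmetric Laplace density with parameter τ ∈ (0,1), let Z be a random variable, θ, θ_0 real numbers, and define the likelihood ratio R = φ(Z − (θ−θ_0))/φ(Z). Then: if θ − θ_0 ≥ 0, |R − 1| ≥ (1 − e^{−(θ−θ_0)(1−τ)})·1_{Z ≤ 0}; and if θ − θ_0 < 0, |R − 1| ≥ (1 − e^{(θ−θ_0)τ})·1_{Z > 0}. -/
open Real

/-- The check function `ρ_τ(z) = z(τ − 1_{z ≤ 0})`. -/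
noncomputable def checkFn (τ z : ℝ) : ℝ := z * (τ - if z ≤ 0 then 1 else 0)

/-- The asymmetric Laplace density `φ(z) = τ(1−τ)e^{−ρ_τ(z)}`. -/
noncomputable def ald (τ z : ℝ) : ℝ := τ * (1 - τ) * Real.exp (-(checkFn τ z))

lemma ald_ratio (τ : ℝ) (hτ : τ ∈ Set.Ioo (0:ℝ) 1) (a z : ℝ) :
    ald τ a / ald τ z = Real.exp (checkFn τ z - checkFn τ a) := by
  obtain ⟨h0, h1⟩ := hτ
  unfold ald
  rw [Real.exp_sub]
  rw [mul_div_mul_left _ _ (ne_of_gt (mul_pos h0 (by linarith)))]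
  rw [div_eq_div_iff (Real.exp_pos _).ne' (Real.exp_pos _).ne']
  rw [← Real.exp_add, ← Real.exp_add]
  ring_nf

/-- lower bounds on `|R − 1|` for the asymmetric Laplace likelihood ratio
`R = φ(Z − (θ−θ₀))/φ(Z)`. -/
theorem ald_likelihood_ratio_lower_bound
    (τ : ℝ) (hτ : τ ∈ Set.Ioo (0:ℝ) 1) (z θ θ₀ : ℝ) :
    (0 ≤ θ - θ₀ →
      (1 - Real.exp (-(θ - θ₀) * (1 - τ))) * (if z ≤ 0 then 1 else 0) ≤
        |ald τ (z - (θ - θ₀)) / ald τ z - 1|) ∧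
    (θ - θ₀ < 0 →
      (1 - Real.exp ((θ - θ₀) * τ)) * (if 0 < z then 1 else 0) ≤
        |ald τ (z - (θ - θ₀)) / ald τ z - 1|) := by
  obtain ⟨h0, h1⟩ := hτ
  set δ := θ - θ₀ with hδ
  rw [ald_ratio τ ⟨h0, h1⟩]
  constructor
  · intro hd
    by_cases hz : z ≤ 0
    · have hzd : z - δ ≤ 0 := by linarith
      simp only [hz, if_pos, mul_one]
      have hc : checkFn τ z - checkFn τ (z - δ) = -δ * (1 - τ) := by
        simp only [checkFn, if_pos hz, if_pos hzd]; ring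
      rw [hc, abs_sub_comm, abs_of_nonneg (by
        have : Real.exp (-δ * (1 - τ)) ≤ 1 :=
          Real.exp_le_one_iff.mpr (by nlinarith)
        linarith)]
    · simp only [hz, if_neg, not_false_iff, mul_zero]
      exact abs_nonneg _
  · intro hd
    by_cases hz : 0 < z
    · have hz' : ¬ z ≤ 0 := not_le.mpr hz
      have hzd : ¬ z - δ ≤ 0 := by push_neg; linarith
      simp only [hz, if_pos, mul_one]
      have hc : checkFn τ z - checkFn τ (z - δ) = δ * τ := by
        simp only [checkFn, if_neg hz', if_neg hzd]; ring
      rw [hc, abs_sub_comm, abs_of_nonneg (by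
        have : Real.exp (δ * τ) ≤ 1 :=
          Real.exp_le_one_iff.mpr (by nlinarith)
        linarith)]
    · simp only [hz, if_neg, not_false_iff, mul_zero]
      exact abs_nonneg _
end

section
/- Let Z be a random variable with P(Z ≤ 0) = τ ∈ (0,1), and let μ be a real number with |μ| ≤ B for some B > 0. With φ the asymmetric Laplace density with parameter τ, there exists a constant C_0 > 0 depending only on B and τ such that E|φ(Z−μ)/φ(Z) − 1| ≥ C_0 · min(τ, 1−τ) · |μ|. -/
open MeasureTheory Real

lemma checkFn_eq (τ z : ℝ) : checkFn τ z = τ * z - min z 0 := by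
  unfold checkFn
  by_cases hz : z ≤ 0
  · simp [hz, min_eq_left hz]; ring
  · push_neg at hz
    simp [if_neg (not_le.mpr hz), min_eq_right hz.le]; ring

lemma min_zero_lip (a b : ℝ) : |min a 0 - min b 0| ≤ |a - b| := by
  rcases le_total a 0 with ha | ha <;> rcases le_total b 0 with hb | hb <;>
    simp only [min_eq_left, min_eq_right, ha, hb] <;> rw [abs_le] <;>
    constructor <;> rcases abs_cases (a - b) with ⟨h1, h2⟩ | ⟨h1, h2⟩ <;> linarith

lemma checkFn_lip (τ a b : ℝ) (hτ0 : 0 ≤ τ) (hτ1 : τ ≤ 1) :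
    |checkFn τ a - checkFn τ b| ≤ 2 * |a - b| := by
  rw [checkFn_eq, checkFn_eq]
  have h1 := min_zero_lip a b
  have h2 : |τ * (a - b)| ≤ |a - b| := by
    rw [abs_mul, abs_of_nonneg hτ0]
    nlinarith [abs_nonneg (a - b)]
  have e : τ * (a - b) = τ * a - τ * b := by ring
  rw [e] at h2
  rw [abs_le] at h1 h2 ⊢
  constructor <;> linarith [h1.1, h1.2, h2.1, h2.2]

lemma ratio_eq (τ z m : ℝ) (h : τ * (1 - τ) ≠ 0) :
    ald τ (z - m) / ald τ z = Real.exp (checkFn τ z - checkFn τ (z - m)) := by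
  unfold ald
  rw [mul_div_mul_left _ _ h, ← Real.exp_sub]
  congr 1; ring

lemma concave_bound (B x : ℝ) (hB : 0 < B) (hx0 : 0 ≤ x) (hxB : x ≤ B) :
    (1 - Real.exp (-B)) / B * x ≤ 1 - Real.exp (-x) := by
  have ha : (0:ℝ) ≤ 1 - x / B := by
    rw [sub_nonneg, div_le_one hB]; exact hxB
  have hb : (0:ℝ) ≤ x / B := div_nonneg hx0 hB.le
  have h := convexOn_exp.2 (Set.mem_univ (0:ℝ)) (Set.mem_univ (-B)) ha hb (by ring)
  simp only [smul_eq_mul, mul_zero, zero_add, Real.exp_zero, mul_one] at h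
  have hxx : x / B * -B = -x := by field_simp
  rw [hxx] at h
  have hKx : (1 - Real.exp (-B)) / B * x = x / B - x / B * Real.exp (-B) := by
    field_simp
  rw [hKx]; linarith

lemma integral_ge_of_eqOn {Ω : Type*} [MeasurableSpace Ω] (P : Measure Ω) [IsFiniteMeasure P]
    (f : Ω → ℝ) (hf : Integrable f P) (hpos : ∀ ω, 0 ≤ f ω) {S : Set Ω}
    (hS : MeasurableSet S) (a : ℝ) (ha : ∀ ω ∈ S, f ω = a) :
    a * (P S).toReal ≤ ∫ ω, f ω ∂P := by
  have h1 : ∫ ω in S, f ω ∂P ≤ ∫ ω, f ω ∂P :=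
    setIntegral_le_integral hf (ae_of_all _ hpos)
  have h2 : ∫ ω in S, f ω ∂P = (P S).toReal * a := by
    rw [setIntegral_congr_fun hS ha, setIntegral_const, smul_eq_mul]; rfl
  linarith

/-- if `P(Z ≤ 0) = τ` and `|μ| ≤ B`, then there is `C₀ > 0` depending only
on `B` and `τ` with `E|φ(Z−μ)/φ(Z) − 1| ≥ C₀·min(τ,1−τ)·|μ|`. -/
theorem ald_expected_ratio_lower_bound
    {Ω : Type*} [MeasurableSpace Ω] (P : Measure Ω) [IsProbabilityMeasure P]
    (Z : Ω → ℝ) (hZ : Measurable Z)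
    (τ : ℝ) (hτ : τ ∈ Set.Ioo (0:ℝ) 1)
    (hPZ : P {ω | Z ω ≤ 0} = ENNReal.ofReal τ)
    (B : ℝ) (hB : 0 < B) :
    ∃ C₀ > 0, ∀ m : ℝ, |m| ≤ B →
      C₀ * min τ (1 - τ) * |m| ≤ ∫ ω, |ald τ (Z ω - m) / ald τ (Z ω) - 1| ∂P := by
  obtain ⟨hτ0, hτ1⟩ := hτ
  have hττ : (0:ℝ) < τ * (1 - τ) := by nlinarith
  have hττ' : τ * (1 - τ) ≠ 0 := hττ.ne'
  set K : ℝ := (1 - Real.exp (-B)) / B with hKdef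
  have hK : 0 < K := by
    apply div_pos _ hB
    have : Real.exp (-B) < 1 := Real.exp_lt_one_iff.mpr (by linarith)
    linarith
  refine ⟨K / 2, by positivity, fun m hm => ?_⟩
  -- measurability of ald
  have hald : Measurable (ald τ) := by
    unfold ald
    apply Measurable.const_mul
    apply Real.measurable_exp.comp
    apply Measurable.neg
    have : (checkFn τ) = fun z => τ * z - min z 0 := funext (checkFn_eq τ)
    rw [this]
    exact (measurable_const.mul measurable_id).sub (measurable_id.min measurable_const)
  -- the integrand
  set f : Ω → ℝ := fun ω => |ald τ (Z ω - m) / ald τ (Z ω) - 1| with hfdef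
  have hfpos : ∀ ω, 0 ≤ f ω := fun ω => abs_nonneg _
  have hfmeas : Measurable f :=
    (((hald.comp (hZ.sub_const m)).div (hald.comp hZ)).sub measurable_const).abs
  have hfbound : ∀ ω, ‖f ω‖ ≤ Real.exp (2 * B) := by
    intro ω
    rw [Real.norm_eq_abs, abs_abs]
    have hr := ratio_eq τ (Z ω) m hττ'
    rw [hr]
    have hD : checkFn τ (Z ω) - checkFn τ (Z ω - m) ≤ 2 * B := by
      have h := checkFn_lip τ (Z ω) (Z ω - m) hτ0.le hτ1.le
      have : |Z ω - (Z ω - m)| = |m| := by congr 1; ring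
      rw [this] at h
      rcases abs_cases (checkFn τ (Z ω) - checkFn τ (Z ω - m)) with ⟨h1, _⟩ | ⟨h1, _⟩ <;>
        linarith
    have he : Real.exp (checkFn τ (Z ω) - checkFn τ (Z ω - m)) ≤ Real.exp (2 * B) :=
      Real.exp_le_exp.mpr hD
    have hp := Real.exp_pos (checkFn τ (Z ω) - checkFn τ (Z ω - m))
    have h1 : (1:ℝ) ≤ Real.exp (2 * B) := Real.one_le_exp (by linarith)
    rw [abs_le]; constructor <;> linarith
  have hfint : Integrable f P :=
    Integrable.mono' (integrable_const (Real.exp (2 * B))) hfmeas.aestronglyMeasurable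
      (ae_of_all _ hfbound)
  have hSmeas : MeasurableSet {ω | Z ω ≤ 0} := hZ measurableSet_Iic
  have hmin2 : min τ (1 - τ) ≤ 2 * (τ * (1 - τ)) := by
    rcases le_total τ (1 - τ) with h | h
    · rw [min_eq_left h]; nlinarith
    · rw [min_eq_right h]; nlinarith
  rw [abs_le] at hm
  rcases le_or_gt 0 m with hm0 | hm0
  · -- m ≥ 0 : use the set {Z ≤ 0}
    set x : ℝ := m * (1 - τ) with hxdef
    have hx0 : 0 ≤ x := by nlinarith
    have hxB : x ≤ B := by nlinarith
    have hPS : (P {ω | Z ω ≤ 0}).toReal = τ := by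
      rw [hPZ, ENNReal.toReal_ofReal hτ0.le]
    have hval : ∀ ω ∈ {ω | Z ω ≤ 0}, f ω = 1 - Real.exp (-x) := by
      intro ω hω
      simp only [Set.mem_setOf_eq] at hω
      rw [hfdef]
      simp only
      rw [ratio_eq τ (Z ω) m hττ']
      have h1 : checkFn τ (Z ω) = Z ω * (τ - 1) := by
        unfold checkFn; rw [if_pos hω]
      have h2 : checkFn τ (Z ω - m) = (Z ω - m) * (τ - 1) := by
        unfold checkFn; rw [if_pos (by linarith : Z ω - m ≤ 0)]
      rw [h1, h2]
      have : Z ω * (τ - 1) - (Z ω - m) * (τ - 1) = -x := by rw [hxdef]; ring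
      rw [this]
      have : Real.exp (-x) ≤ 1 := Real.exp_le_one_iff.mpr (by linarith)
      rw [abs_of_nonpos (by linarith)]
      ring
    have hge := integral_ge_of_eqOn P f hfint hfpos hSmeas _ hval
    rw [hPS] at hge
    have hcb := concave_bound B x hB hx0 hxB
    rw [abs_of_nonneg hm0]
    have key : 0 ≤ K * m * (τ * (1 - τ) - min τ (1 - τ) / 2) :=
      mul_nonneg (mul_nonneg hK.le hm0) (by linarith)
    have h3 : K / 2 * min τ (1 - τ) * m ≤ τ * (K * x) := by rw [hxdef]; nlinarith [key]
    have h4 : τ * (K * x) ≤ τ * (1 - Real.exp (-x)) :=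
      mul_le_mul_of_nonneg_left hcb hτ0.le
    linarith
  · -- m < 0 : use the set {Z > 0}
    set x : ℝ := -m * τ with hxdef
    have hx0 : 0 ≤ x := by nlinarith
    have hxB : x ≤ B := by nlinarith
    have hPS : (P {ω | Z ω ≤ 0}ᶜ).toReal = 1 - τ := by
      rw [measure_compl hSmeas (measure_ne_top _ _), hPZ, measure_univ]
      rw [← ENNReal.ofReal_one, ← ENNReal.ofReal_sub _ hτ0.le,
        ENNReal.toReal_ofReal (by linarith)]
    have hval : ∀ ω ∈ {ω | Z ω ≤ 0}ᶜ, f ω = 1 - Real.exp (-x) := by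
      intro ω hω
      simp only [Set.mem_compl_iff, Set.mem_setOf_eq, not_le] at hω
      rw [hfdef]
      simp only
      rw [ratio_eq τ (Z ω) m hττ']
      have h1 : checkFn τ (Z ω) = Z ω * τ := by
        unfold checkFn; rw [if_neg (not_le.mpr hω)]; ring
      have h2 : checkFn τ (Z ω - m) = (Z ω - m) * τ := by
        unfold checkFn; rw [if_neg (not_le.mpr (by linarith : (0:ℝ) < Z ω - m))]; ring
      rw [h1, h2]
      have : Z ω * τ - (Z ω - m) * τ = -x := by rw [hxdef]; ring
      rw [this]
      have : Real.exp (-x) ≤ 1 := Real.exp_le_one_iff.mpr (by linarith)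
      rw [abs_of_nonpos (by linarith)]
      ring
    have hge := integral_ge_of_eqOn P f hfint hfpos hSmeas.compl _ hval
    rw [hPS] at hge
    have hcb := concave_bound B x hB hx0 hxB
    rw [abs_of_neg hm0]
    have key : 0 ≤ K * (-m) * (τ * (1 - τ) - min τ (1 - τ) / 2) :=
      mul_nonneg (mul_nonneg hK.le (by linarith)) (by linarith)
    have h3 : K / 2 * min τ (1 - τ) * (-m) ≤ (1 - τ) * (K * x) := by rw [hxdef]; nlinarith [key]
    have h4 : (1 - τ) * (K * x) ≤ (1 - τ) * (1 - Real.exp (-x)) :=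
      mul_le_mul_of_nonneg_left hcb (by linarith)
    linarith
end

section
/- Let f_0 be the density on (0,1) whose distribution function is F_0(y) = 2y[1 − (−log(1 − 2^{−1/2}))^{−1/2}] for y ∈ (0,1/2] and F_0(y) = 1 − (−log(1 − y^{1/2}))^{−1/2} for y ∈ (1/2, 1). If Y_1, Y_2, ... are i.i.d. with distribution F_0 and M_n = max(Y_1,...,Y_n), then P(1 − M_n^{1/2} > e^{−n}) ≤ e^{−√n} for large n, and hence by Borel–Cantelli, almost surely 1 − M_n^{1/2} < e^{−n} for all sufficiently large n. -/
open MeasureTheory Real Filter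

/-- The distribution function `F₀` of the example. -/
noncomputable def F0 (y : ℝ) : ℝ :=
  if y ≤ 1/2 then
    2 * y * (1 - (-(Real.log (1 - (2:ℝ) ^ (-(1/2) : ℝ)))) ^ (-(1/2) : ℝ))
  else
    1 - (-(Real.log (1 - Real.sqrt y))) ^ (-(1/2) : ℝ)

/-- `Mmax Y n ω = max(Y₀ ω, ..., Y_{n-1} ω)` (for `n ≥ 1`). -/
noncomputable def Mmax {Ω : Type*} (Y : ℕ → Ω → ℝ) (n : ℕ) (ω : Ω) : ℝ :=
  (Finset.range n).fold max (Y 0 ω) fun i => Y i ω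

lemma exp_neg_small {n : ℕ} (hn : 2 ≤ n) : Real.exp (-(n:ℝ)) ≤ 1/7 := by
  have h1 : Real.exp (-(n:ℝ)) ≤ Real.exp (-2) := by
    apply Real.exp_le_exp.2; have : (2:ℝ) ≤ n := by exact_mod_cast hn
    linarith
  have h2 : (2.7182818283 : ℝ) < Real.exp 1 := Real.exp_one_gt_d9
  have h3 : Real.exp (-2) = (Real.exp 1 * Real.exp 1)⁻¹ := by
    rw [← Real.exp_add, ← Real.exp_neg]; norm_num
  have hpos : (0:ℝ) < Real.exp 1 := Real.exp_pos 1
  have : (7:ℝ) < Real.exp 1 * Real.exp 1 := by nlinarith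
  rw [h3] at h1
  have : (Real.exp 1 * Real.exp 1)⁻¹ ≤ 1/7 := by
    rw [inv_le_comm₀ (by nlinarith) (by norm_num)]; nlinarith
  linarith

lemma F0_val {n : ℕ} (hn : 2 ≤ n) :
    F0 ((1 - Real.exp (-(n:ℝ)))^2) = 1 - (Real.sqrt n)⁻¹ := by
  set ε := Real.exp (-(n:ℝ)) with hε
  have hεpos : 0 < ε := Real.exp_pos _
  have hεle : ε ≤ 1/7 := exp_neg_small hn
  have ht : ¬ ((1 - ε)^2 ≤ 1/2) := by nlinarith
  rw [F0, if_neg ht]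
  have hsq : Real.sqrt ((1 - ε)^2) = 1 - ε := by
    rw [Real.sqrt_sq (by linarith)]
  rw [hsq]
  have : (1:ℝ) - (1 - ε) = ε := by ring
  rw [this, hε, Real.log_exp, neg_neg]
  rw [Real.rpow_neg (n.cast_nonneg), ← Real.sqrt_eq_rpow]

lemma summable_exp_neg_sqrt : Summable fun n : ℕ => Real.exp (-Real.sqrt n) := by
  rw [← summable_nat_add_iff 1]
  have hb : Summable (fun n : ℕ => 24 * ((1:ℝ)/((n:ℝ)+1)^2)) := by
    apply Summable.mul_left
    have := Real.summable_one_div_nat_pow.2 (show 1 < 2 by norm_num)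
    exact ((summable_nat_add_iff 1).2 this).congr (fun n => by push_cast; ring)
  apply hb.of_nonneg_of_le (fun n => (Real.exp_pos _).le)
  · intro n
    have hpos : (0:ℝ) < ((n:ℝ)+1) := by positivity
    have hs : Real.sqrt ((n:ℕ)+1 : ℕ) = Real.sqrt ((n:ℝ)+1) := by push_cast; ring_nf
    have h4 : Real.sqrt ((n:ℝ)+1) ^ 4 / Nat.factorial 4 ≤ Real.exp (Real.sqrt ((n:ℝ)+1)) := by
      exact_mod_cast Real.pow_div_factorial_le_exp (Real.sqrt ((n:ℝ)+1)) (Real.sqrt_nonneg ((n:ℝ)+1)) 4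
    have hsq4 : Real.sqrt ((n:ℝ)+1) ^ 4 = ((n:ℝ)+1)^2 := by
      rw [show (4:ℕ) = 2*2 from rfl, pow_mul, Real.sq_sqrt hpos.le]
    rw [hsq4] at h4
    have hfac : (Nat.factorial 4 : ℝ) = 24 := by norm_num [Nat.factorial]
    rw [hfac] at h4
    have hexppos : 0 < Real.exp (Real.sqrt ((n:ℝ)+1)) := Real.exp_pos _
    rw [hs, Real.exp_neg]
    rw [inv_le_comm₀ hexppos (by positivity)]
    have heq : (24 * ((1:ℝ)/((n:ℝ)+1)^2))⁻¹ = ((n:ℝ)+1)^2/24 := by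
      field_simp
    rw [heq]; exact h4


/-- for i.i.d. `Y₁, Y₂, …` with distribution function `F₀` and
`Mₙ = max(Y₁,…,Yₙ)`, one has `P(1 − √Mₙ > e^{−n}) ≤ e^{−√n}` for large `n`, and hence,
by Borel–Cantelli, almost surely `1 − √Mₙ < e^{−n}` for all sufficiently large `n`. -/
theorem max_tail_bound_and_borel_cantelli
    {Ω : Type*} [MeasurableSpace Ω] (P : Measure Ω) [IsProbabilityMeasure P]
    (Y : ℕ → Ω → ℝ) (hmeas : ∀ i, Measurable (Y i))
    (hindep : ProbabilityTheory.iIndepFun Y P)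
    (hcdf : ∀ i, ∀ t ∈ Set.Ioo (0:ℝ) 1, P {ω | Y i ω ≤ t} = ENNReal.ofReal (F0 t))
    (hsupp : ∀ i, ∀ᵐ ω ∂P, Y i ω ∈ Set.Ioo (0:ℝ) 1) :
    (∃ N : ℕ, ∀ n ≥ N, 1 ≤ n →
      P {ω | Real.exp (-(n:ℝ)) < 1 - Real.sqrt (Mmax Y n ω)} ≤
        ENNReal.ofReal (Real.exp (-Real.sqrt n))) ∧
    ∀ᵐ ω ∂P, ∀ᶠ n : ℕ in atTop, 1 - Real.sqrt (Mmax Y n ω) < Real.exp (-(n:ℝ)) := by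
  set t : ℕ → ℝ := fun n => (1 - Real.exp (-(n:ℝ)))^2 with htdef
  have htmem : ∀ n : ℕ, 2 ≤ n → t n ∈ Set.Ioo (0:ℝ) 1 := by
    intro n hn
    have hεpos : 0 < Real.exp (-(n:ℝ)) := Real.exp_pos _
    have hεle : Real.exp (-(n:ℝ)) ≤ 1/7 := exp_neg_small hn
    constructor <;> simp only [htdef] <;> nlinarith
  have hF0nonneg : ∀ n : ℕ, 2 ≤ n → 0 ≤ 1 - (Real.sqrt n)⁻¹ := by
    intro n hn
    have h1 : (1:ℝ) ≤ Real.sqrt n :=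
      Real.one_le_sqrt.2 (by exact_mod_cast le_trans (by norm_num) hn)
    have := inv_le_one_of_one_le₀ h1
    linarith
  have hC : ∀ n : ℕ, 2 ≤ n → P (⋂ i ∈ Finset.range n, {ω | Y i ω ≤ t n})
      = ENNReal.ofReal ((1 - (Real.sqrt n)⁻¹)^n) := by
    intro n hn
    rw [hindep.meas_biInter (s := fun i => {ω | Y i ω ≤ t n}) (fun i _ => ⟨Set.Iic (t n), measurableSet_Iic, rfl⟩)]
    rw [Finset.prod_congr rfl (fun i _ => hcdf i (t n) (htmem n hn))]
    rw [Finset.prod_const, Finset.card_range, ← ENNReal.ofReal_pow]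
    · rw [F0_val hn]
    · rw [F0_val hn]; exact hF0nonneg n hn
  have hpow : ∀ n : ℕ, 2 ≤ n → (1 - (Real.sqrt n)⁻¹)^n ≤ Real.exp (-Real.sqrt n) := by
    intro n hn
    have hn1 : (1:ℝ) ≤ (n:ℝ) := by exact_mod_cast le_trans (by norm_num) hn
    have hsle : Real.sqrt n ≤ (n:ℝ) := Real.sqrt_le_iff.2 ⟨by linarith, by nlinarith⟩
    have h := Real.one_sub_div_pow_le_exp_neg (n := n) (t := Real.sqrt n) hsle
    have hdiv : Real.sqrt n / (n:ℝ) = (Real.sqrt n)⁻¹ := by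
      rw [Real.sqrt_div_self']; ring
    rwa [hdiv] at h
  set B : ℕ → Set Ω := fun n => {ω | Real.exp (-(n:ℝ)) ≤ 1 - Real.sqrt (Mmax Y n ω)}
    with hBdef
  have hgood : ∀ᵐ ω ∂P, ∀ i, Y i ω ∈ Set.Ioo (0:ℝ) 1 := ae_all_iff.2 hsupp
  have hsubset : ∀ n : ℕ, ∀ ω : Ω, (∀ i, Y i ω ∈ Set.Ioo (0:ℝ) 1) → ω ∈ B n →
      ω ∈ ⋂ i ∈ Finset.range n, {ω | Y i ω ≤ t n} := by
    intro n ω hω hBω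
    simp only [Set.mem_iInter, Set.mem_setOf_eq]
    intro i hi
    have hM0 : 0 < Mmax Y n ω :=
      lt_of_lt_of_le (hω 0).1 ((Finset.le_fold_max _).2 (Or.inl le_rfl))
    have hYle : Y i ω ≤ Mmax Y n ω := (Finset.le_fold_max _).2 (Or.inr ⟨i, hi, le_rfl⟩)
    have hBω' : Real.exp (-(n:ℝ)) ≤ 1 - Real.sqrt (Mmax Y n ω) := hBω
    have hsqrtle : Real.sqrt (Mmax Y n ω) ≤ 1 - Real.exp (-(n:ℝ)) := by linarith
    have hMle : Mmax Y n ω ≤ t n := by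
      have h1 : Real.sqrt (Mmax Y n ω) ^ 2 ≤ (1 - Real.exp (-(n:ℝ)))^2 :=
        pow_le_pow_left₀ (Real.sqrt_nonneg _) hsqrtle 2
      rwa [Real.sq_sqrt hM0.le] at h1
    exact hYle.trans hMle
  have hBle : ∀ n : ℕ, 2 ≤ n → P (B n) ≤ ENNReal.ofReal (Real.exp (-Real.sqrt n)) := by
    intro n hn
    have h1 : P (B n) ≤ P (⋂ i ∈ Finset.range n, {ω | Y i ω ≤ t n}) := by
      apply measure_mono_ae
      filter_upwards [hgood] with ω hω hBω
      exact hsubset n ω hω hBω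
    rw [hC n hn] at h1
    exact h1.trans (ENNReal.ofReal_le_ofReal (hpow n hn))
  constructor
  · refine ⟨2, fun n hn _ => ?_⟩
    refine le_trans (measure_mono ?_) (hBle n hn)
    intro ω hω
    have hω' : Real.exp (-(n:ℝ)) < 1 - Real.sqrt (Mmax Y n ω) := hω
    exact le_of_lt hω'
  · have hsum : (∑' n : ℕ, P (B (n+2))) ≠ ⊤ := by
      apply ne_of_lt
      calc ∑' n : ℕ, P (B (n+2))
          ≤ ∑' n : ℕ, ENNReal.ofReal (Real.exp (-Real.sqrt ((n+2 : ℕ) : ℝ))) :=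
            ENNReal.tsum_le_tsum (fun n => hBle (n+2) (by omega))
        _ = ENNReal.ofReal (∑' n : ℕ, Real.exp (-Real.sqrt ((n+2 : ℕ) : ℝ))) := by
            rw [ENNReal.ofReal_tsum_of_nonneg (fun n => (Real.exp_pos _).le)
              ((summable_nat_add_iff 2).2 summable_exp_neg_sqrt)]
        _ < ⊤ := ENNReal.ofReal_lt_top
    have hae := MeasureTheory.ae_eventually_notMem hsum
    filter_upwards [hae] with ω hω
    rw [eventually_atTop] at hω ⊢
    obtain ⟨N, hN⟩ := hω
    refine ⟨N + 2, fun n hn => ?_⟩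
    have h1 := hN (n - 2) (by omega)
    have h2 : n - 2 + 2 = n := by omega
    rw [h2] at h1
    simp only [hBdef, Set.mem_setOf_eq, not_le] at h1
    linarith
end
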